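/- arXiv:1708.08048 — 2 statements merged into one kernel-verified Lean document; each statement's English description precedes it below -/
import Mathlib

section
/- Binomial inverse (Woodbury) formula for the regularized Newton system: Let n, m be positive integers, Q a real n × n orthogonal matrix (QQᵀ = QᵀQ = I), Λ = diag(λ₁, …, λₙ) a diagonal matrix with all λᵢ ∈ [0,1], μ > 0, and A an m × n real matrix with AAᵀ = I_m. Define H = Q((μ+1)I − Λ)Qᵀ, W = Q(I − 2Λ)Qᵀ, and T = Q L Qᵀ with L = diag(λᵢ μ / (μ + 1 − λᵢ)). Then the m × m matrix (μ²/(2μ+1)) I_m + A T Aᵀ is invertible, the n × n matrix H − AᵀAW is invertible, and (H − AᵀAW)⁻¹ = (1/(μ(μ+1))) (μ I + T) (I + Aᵀ ((μ²/(2μ+1)) I_m + A T Aᵀ)⁻¹ A ((μ/(2μ+1)) I − T)). -/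
open Matrix

lemma smul_one_sub_smul_diag {N : ℕ} (a b : ℝ) (f : Fin N → ℝ) :
    a • (1 : Matrix (Fin N) (Fin N) ℝ) - b • Matrix.diagonal f
      = Matrix.diagonal (fun i => a - b * f i) := by
  rw [Matrix.smul_one_eq_diagonal, ← Matrix.diagonal_smul, Matrix.diagonal_sub]
  rfl

/-- Binomial inverse (Woodbury) formula for the regularized Newton system. -/
theorem woodbury_regularized_newton_system
    (n m : ℕ) (hn : 0 < n) (hm : 0 < m)
    (Q : Matrix (Fin n) (Fin n) ℝ) (hQ : Q * Qᵀ = 1 ∧ Qᵀ * Q = 1)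
    (lam : Fin n → ℝ) (hlam : ∀ i, lam i ∈ Set.Icc (0 : ℝ) 1)
    (μ : ℝ) (hμ : 0 < μ)
    (A : Matrix (Fin m) (Fin n) ℝ) (hA : A * Aᵀ = 1)
    (H W T : Matrix (Fin n) (Fin n) ℝ)
    (hH : H = Q * ((μ + 1) • (1 : Matrix (Fin n) (Fin n) ℝ)
                    - Matrix.diagonal lam) * Qᵀ)
    (hW : W = Q * ((1 : Matrix (Fin n) (Fin n) ℝ)
                    - (2 : ℝ) • Matrix.diagonal lam) * Qᵀ)
    (hT : T = Q * Matrix.diagonal (fun i => lam i * μ / (μ + 1 - lam i)) * Qᵀ) :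
    IsUnit ((μ ^ 2 / (2 * μ + 1)) • (1 : Matrix (Fin m) (Fin m) ℝ)
              + A * T * Aᵀ) ∧
      IsUnit (H - Aᵀ * A * W) ∧
      (H - Aᵀ * A * W)⁻¹ =
        (1 / (μ * (μ + 1))) •
          ((μ • (1 : Matrix (Fin n) (Fin n) ℝ) + T) *
            ((1 : Matrix (Fin n) (Fin n) ℝ) +
              Aᵀ * ((μ ^ 2 / (2 * μ + 1)) • (1 : Matrix (Fin m) (Fin m) ℝ)
                      + A * T * Aᵀ)⁻¹ * A *
                ((μ / (2 * μ + 1)) • (1 : Matrix (Fin n) (Fin n) ℝ) - T))) := by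
  obtain ⟨hQ1, hQ2⟩ := hQ
  have hμ0 : μ ≠ 0 := hμ.ne'
  have hμ1 : μ + 1 ≠ 0 := by linarith
  have h2μ1 : 2 * μ + 1 ≠ 0 := by linarith
  have hd : ∀ i, μ + 1 - lam i ≠ 0 := fun i => by have := (hlam i).2; nlinarith
  set t : Fin n → ℝ := fun i => lam i * μ / (μ + 1 - lam i) with ht_def
  have ht0 : ∀ i, 0 ≤ t i := fun i =>
    div_nonneg (mul_nonneg (hlam i).1 hμ.le) (by have := (hlam i).2; linarith)
  -- conjugation helpers
  have hconj : ∀ f g : Fin n → ℝ,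
      (Q * diagonal f * Qᵀ) * (Q * diagonal g * Qᵀ)
        = Q * diagonal (fun i => f i * g i) * Qᵀ := by
    intro f g
    have h : Qᵀ * (Q * (diagonal g * Qᵀ)) = diagonal g * Qᵀ := by
      rw [← Matrix.mul_assoc, hQ2, Matrix.one_mul]
    calc (Q * diagonal f * Qᵀ) * (Q * diagonal g * Qᵀ)
        = Q * (diagonal f * (Qᵀ * (Q * (diagonal g * Qᵀ)))) := by
          simp only [Matrix.mul_assoc]
      _ = Q * (diagonal f * (diagonal g * Qᵀ)) := by rw [h]
      _ = Q * diagonal (fun i => f i * g i) * Qᵀ := by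
          rw [← Matrix.mul_assoc (diagonal f), Matrix.diagonal_mul_diagonal,
            Matrix.mul_assoc]
  have hsmul : ∀ (a : ℝ) (f : Fin n → ℝ),
      a • (Q * diagonal f * Qᵀ) = Q * diagonal (fun i => a * f i) * Qᵀ := by
    intro a f
    have h : (diagonal (fun i => a * f i) : Matrix (Fin n) (Fin n) ℝ)
        = a • diagonal f := by
      rw [← Matrix.diagonal_smul]; rfl
    rw [h, Matrix.mul_smul, Matrix.smul_mul]
  have hone : Q * diagonal (fun _ : Fin n => (1:ℝ)) * Qᵀ = 1 := by
    rw [Matrix.diagonal_one, Matrix.mul_one, hQ1]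
  -- expressions as conjugated diagonals
  have hH' : H = Q * diagonal (fun i => μ + 1 - lam i) * Qᵀ := by
    rw [hH]
    congr 2
    rw [show (Matrix.diagonal lam : Matrix (Fin n) (Fin n) ℝ)
        = (1:ℝ) • Matrix.diagonal lam from (one_smul ℝ _).symm,
      smul_one_sub_smul_diag]
    simp only [one_mul]
  have hW' : W = Q * diagonal (fun i => 1 - 2 * lam i) * Qᵀ := by
    rw [hW]
    congr 2
    rw [show ((1 : Matrix (Fin n) (Fin n) ℝ)) = (1:ℝ) • (1 : Matrix (Fin n) (Fin n) ℝ)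
        from (one_smul ℝ _).symm, smul_one_sub_smul_diag]
  set k : ℝ := μ * (μ + 1) / (2 * μ + 1) with hk_def
  have hk0 : k ≠ 0 := by rw [hk_def]; positivity
  set S : Matrix (Fin m) (Fin m) ℝ :=
    (μ ^ 2 / (2 * μ + 1)) • (1 : Matrix (Fin m) (Fin m) ℝ) + A * T * Aᵀ with hS_def
  set E : Matrix (Fin n) (Fin n) ℝ :=
    (1 / (μ * (μ + 1))) • (μ • (1 : Matrix (Fin n) (Fin n) ℝ) + T) with hE_def
  set G : Matrix (Fin n) (Fin n) ℝ :=
    (μ / (2 * μ + 1)) • (1 : Matrix (Fin n) (Fin n) ℝ) - T with hG_def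
  have hE' : E = Q * diagonal (fun i => (1 / (μ * (μ + 1))) * (μ + t i)) * Qᵀ := by
    rw [hE_def, hT, ← hsmul]
    congr 1
    rw [show (diagonal (fun i => μ + t i) : Matrix (Fin n) (Fin n) ℝ)
        = diagonal (fun _ => μ) + diagonal t from by rw [← Matrix.diagonal_add],
      ← Matrix.smul_one_eq_diagonal, Matrix.mul_add, Matrix.add_mul,
      Matrix.mul_smul, Matrix.smul_mul, Matrix.mul_one, hQ1]
  have hG' : G = Q * diagonal (fun i => μ / (2 * μ + 1) - t i) * Qᵀ := by
    rw [hG_def, hT,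
      show (diagonal (fun i => μ / (2 * μ + 1) - t i) : Matrix (Fin n) (Fin n) ℝ)
        = diagonal (fun _ => μ / (2 * μ + 1)) - diagonal t from by
          rw [Matrix.diagonal_sub],
      ← Matrix.smul_one_eq_diagonal, Matrix.mul_sub, Matrix.sub_mul,
      Matrix.mul_smul, Matrix.smul_mul, Matrix.mul_one, hQ1]
  -- key identities
  have hEH : E * H = 1 := by
    rw [hE', hH', hconj]
    rw [show (fun i => 1 / (μ * (μ + 1)) * (μ + t i) * (μ + 1 - lam i))
        = fun _ : Fin n => (1:ℝ) from funext fun i => by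
          have hdi := hd i
          simp only [ht_def]
          field_simp
          ring, hone]
  have hHE : H * E = 1 := by
    rw [hE', hH', hconj]
    rw [show (fun i => (μ + 1 - lam i) * (1 / (μ * (μ + 1)) * (μ + t i)))
        = fun _ : Fin n => (1:ℝ) from funext fun i => by
          have hdi := hd i
          simp only [ht_def]
          field_simp
          ring, hone]
  have hWE : W * E = k⁻¹ • G := by
    rw [hW', hE', hconj, hG', hsmul]
    congr 1
    rw [show (fun i => (1 - 2 * lam i) * (1 / (μ * (μ + 1)) * (μ + t i)))
        = fun i => k⁻¹ * (μ / (2 * μ + 1) - t i) from funext fun i => by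
          have hdi := hd i
          simp only [ht_def, hk_def]
          field_simp
          ring]
  have hATA : A * T * Aᵀ = (A * Q) * diagonal t * (A * Q)ᵀ := by
    rw [hT, Matrix.transpose_mul]
    simp only [Matrix.mul_assoc]
  have hSpos : S.PosDef := by
    rw [hS_def, Matrix.smul_one_eq_diagonal]
    apply Matrix.PosDef.add_posSemidef
    · rw [Matrix.posDef_diagonal_iff]
      intro i; positivity
    · rw [hATA, ← Matrix.conjTranspose_eq_transpose_of_trivial]
      exact (Matrix.posSemidef_diagonal_iff.mpr ht0).mul_mul_conjTranspose_same _
  have hSdet : IsUnit S.det := (ne_of_gt hSpos.det_pos).isUnit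
  have hSunit : IsUnit S := (Matrix.isUnit_iff_isUnit_det S).mpr hSdet
  have hSS : S * S⁻¹ = 1 := Matrix.mul_nonsing_inv S hSdet
  have hAGA : A * G * Aᵀ = k • 1 - S := by
    rw [hG_def, hS_def, Matrix.mul_sub, Matrix.sub_mul, Matrix.mul_smul,
      Matrix.smul_mul, Matrix.mul_one, hA]
    rw [show k • (1 : Matrix (Fin m) (Fin m) ℝ)
        = (μ / (2 * μ + 1)) • 1 + (μ ^ 2 / (2 * μ + 1)) • 1 from by
      rw [← add_smul]; congr 1; rw [hk_def]; field_simp; ring]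
    abel
  -- the right inverse
  set R : Matrix (Fin n) (Fin n) ℝ := 1 + Aᵀ * S⁻¹ * A * G with hR_def
  have key : (H - Aᵀ * A * W) * (E * R) = 1 := by
    have h1 : (H - Aᵀ * A * W) * E = 1 - k⁻¹ • (Aᵀ * A * G) := by
      rw [Matrix.sub_mul, hHE, Matrix.mul_assoc (Aᵀ * A) W E, hWE,
        Matrix.mul_smul]
    have e1 : (Aᵀ * A * G) * (Aᵀ * S⁻¹ * A * G)
        = Aᵀ * ((A * G * Aᵀ) * S⁻¹) * (A * G) := by
      simp only [Matrix.mul_assoc]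
    have e2 : (A * G * Aᵀ) * S⁻¹ = k • S⁻¹ - 1 := by
      rw [hAGA, Matrix.sub_mul, Matrix.smul_mul, Matrix.one_mul, hSS]
    have h2 : (Aᵀ * A * G) * (Aᵀ * S⁻¹ * A * G)
        = k • (Aᵀ * S⁻¹ * A * G) - Aᵀ * A * G := by
      rw [e1, e2]
      simp only [Matrix.mul_sub, Matrix.sub_mul, Matrix.mul_smul,
        Matrix.smul_mul, Matrix.mul_one, Matrix.one_mul, Matrix.mul_assoc]
    rw [← Matrix.mul_assoc, h1, hR_def, Matrix.sub_mul, Matrix.one_mul,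
      Matrix.smul_mul, Matrix.mul_add, Matrix.mul_one, h2, smul_add, smul_sub,
      smul_smul, inv_mul_cancel₀ hk0, one_smul]
    abel
  have hMunit : IsUnit (H - Aᵀ * A * W) := by
    have hdet : IsUnit (H - Aᵀ * A * W).det := by
      have h := congrArg Matrix.det key
      rw [Matrix.det_mul, Matrix.det_one] at h
      exact IsUnit.of_mul_eq_one _ h
    exact (Matrix.isUnit_iff_isUnit_det _).mpr hdet
  refine ⟨hSunit, hMunit, ?_⟩
  rw [Matrix.inv_eq_right_inv key, hE_def, Matrix.smul_mul]
end

section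
/- Positive semidefiniteness of the Douglas–Rachford generalized Jacobian: Let E be a real inner product space and let M, D : E → E be linear maps such that M is self-adjoint with 0 ≤ ⟨M x, x⟩ ≤ ‖x‖² for all x ∈ E, and D is self-adjoint and idempotent (D ∘ D = D). Then the linear map J = M + D ∘ (id − 2M) is positive semidefinite in the sense that ⟨J x, x⟩ ≥ 0 for all x ∈ E. -/
open scoped RealInnerProductSpace

/-- Positive semidefiniteness of the Douglas–Rachford generalized Jacobian
`J = M + D ∘ (id − 2M)`. -/
theorem dr_generalized_jacobian_psd
    {E : Type*} [NormedAddCommGroup E] [InnerProductSpace ℝ E]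
    (M D : E →ₗ[ℝ] E)
    (hMsa : ∀ x y : E, ⟪M x, y⟫ = ⟪x, M y⟫)
    (hMpos : ∀ x : E, 0 ≤ ⟪M x, x⟫)
    (hMcontr : ∀ x : E, ⟪M x, x⟫ ≤ ‖x‖ ^ 2)
    (hDsa : ∀ x y : E, ⟪D x, y⟫ = ⟪x, D y⟫)
    (hDidem : D ∘ₗ D = D)
    (J : E →ₗ[ℝ] E)
    (hJ : J = M + D ∘ₗ (LinearMap.id - (2 : ℝ) • M)) :
    ∀ x : E, 0 ≤ ⟪J x, x⟫ := by
  intro x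
  set y := D x with hy
  have hDDx : D (D x) = D x := by
    have := congrArg (fun L : E →ₗ[ℝ] E => L x) hDidem
    simpa using this
  -- compute ⟪J x, x⟫
  have hJx : ⟪J x, x⟫ = ⟪M x, x⟫ - 2 * ⟪M x, y⟫ + ‖y‖ ^ 2 := by
    have h1 : J x = M x + D (x - (2:ℝ) • M x) := by
      rw [hJ]; simp
    rw [h1, inner_add_left, hDsa]
    rw [inner_sub_left, real_inner_smul_left]
    have hxDx : ⟪x, D x⟫ = ‖y‖ ^ 2 := by
      rw [← hDDx, ← hDsa, ← hy, real_inner_self_eq_norm_sq]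
    rw [hxDx, hMsa]
    ring
  rw [hJx]
  set a := ⟪M x, x⟫ with ha
  -- Cauchy-Schwarz for the PSD form
  have hCS : ⟪M x, y⟫ ^ 2 ≤ ⟪M y, y⟫ * a := by
    have hquad : ∀ t : ℝ, 0 ≤ ⟪M y, y⟫ * (t * t) + (2 * ⟪M x, y⟫) * t + a := by
      intro t
      have h := hMpos (x + t • y)
      have hexp : ⟪M (x + t • y), x + t • y⟫
          = ⟪M y, y⟫ * (t * t) + (2 * ⟪M x, y⟫) * t + a := by
        rw [map_add, map_smul]
        rw [inner_add_left, inner_add_right, inner_add_right,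
          real_inner_smul_left, real_inner_smul_right, real_inner_smul_left,
          real_inner_smul_right]
        have : ⟪M y, x⟫ = ⟪M x, y⟫ := by rw [hMsa, real_inner_comm]
        rw [this]; ring
      linarith [hexp ▸ h]
    have := discrim_le_zero hquad
    rw [discrim] at this
    nlinarith
  have hMyy : ⟪M y, y⟫ ≤ ‖y‖ ^ 2 := hMcontr y
  have ha0 : 0 ≤ a := hMpos x
  have hCS' : ⟪M x, y⟫ ^ 2 ≤ ‖y‖ ^ 2 * a := by nlinarith
  have hB : ⟪M x, y⟫ ≤ ‖y‖ * Real.sqrt a := by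
    have h1 : ⟪M x, y⟫ ≤ Real.sqrt (⟪M x, y⟫ ^ 2) := by
      rw [Real.sqrt_sq_eq_abs]; exact le_abs_self _
    calc ⟪M x, y⟫ ≤ Real.sqrt (⟪M x, y⟫ ^ 2) := h1
      _ ≤ Real.sqrt (‖y‖ ^ 2 * a) := Real.sqrt_le_sqrt hCS'
      _ = ‖y‖ * Real.sqrt a := by
          rw [Real.sqrt_mul (sq_nonneg _), Real.sqrt_sq (norm_nonneg _)]
  have hsa : Real.sqrt a ^ 2 = a := Real.sq_sqrt ha0
  nlinarith [sq_nonneg (Real.sqrt a - ‖y‖)]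
end
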